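/- For k > -1 and γ > 2k+2, the integral I_{γ,k}(r) = ∫_{-1}^1 (1-t²)^k (1-2rt+r²)^{-γ/2} dt satisfies |I_{γ,k}(r)| ≤ C_{γ,k} |1-r|^{-γ+2k+2} for r near 1, r ≠ 1. -/

import Mathlib

open Real

/-- The kernel `I_{γ,k}(r) = ∫_{-1}^1 (1-t²)^k (1-2rt+r²)^{-γ/2} dt`. -/
noncomputable def Ikernel (γ k r : ℝ) : ℝ :=
  ∫ t in (-1 : ℝ)..1, (1 - t ^ 2) ^ k * (1 - 2 * r * t + r ^ 2) ^ (-γ / 2)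

set_option maxHeartbeats 1000000 in
open MeasureTheory intervalIntegral in
private lemma aux_bound (γ k : ℝ) (hk : k > -1) (hγ : γ > 2 * k + 2) :
    ∀ r : ℝ, 0 < r → |r - 1| < 1/2 → r ≠ 1 →
      |(∫ t in (-1 : ℝ)..1, (1 - t ^ 2) ^ k * (1 - 2 * r * t + r ^ 2) ^ (-γ / 2))|
        ≤ (max 1 (2 ^ k)) * (1/(k+1) + 1/(k+1) + 1/(γ/2 - k - 1)) * |1 - r| ^ (-γ + 2 * k + 2) := by
  intro r hr hre hrne
  set M : ℝ := max 1 (2 ^ k) with hMdef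
  have hM1 : (1:ℝ) ≤ M := le_max_left _ _
  have hM0 : (0:ℝ) < M := lt_of_lt_of_le one_pos hM1
  have hk1 : (0:ℝ) < k + 1 := by linarith
  have hγ0 : (0:ℝ) < γ := by linarith
  have hp : k - γ/2 + 1 < 0 := by linarith
  set f : ℝ → ℝ := fun t => (1 - t ^ 2) ^ k * (1 - 2 * r * t + r ^ 2) ^ (-γ / 2) with hfdef
  set δ : ℝ := |1 - r| with hδdef
  have hδ0 : 0 < δ := abs_pos.mpr (fun h => hrne (by linarith [sub_eq_zero.mp h]))
  have hδhalf : δ < 1/2 := by rw [hδdef, abs_sub_comm]; exact hre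
  have hrlo : 1/2 < r := by cases' abs_sub_lt_iff.mp hre with h1 h2; linarith
  have hrhi : r < 3/2 := by cases' abs_sub_lt_iff.mp hre with h1 h2; linarith
  have hδsq : δ^2 = (1 - r)^2 := sq_abs _
  have hδsq0 : 0 < δ^2 := by positivity
  have hδsq1 : δ^2 < 1 := by nlinarith
  -- helper : x^k ≤ M for 1 ≤ x ≤ 2
  have hxM : ∀ x : ℝ, 1 ≤ x → x ≤ 2 → x ^ k ≤ M := by
    intro x hx1 hx2
    rcases le_or_gt 0 k with hk0 | hk0
    · exact le_trans (rpow_le_rpow (by linarith) hx2 hk0) (le_max_right _ _)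
    · exact le_trans (rpow_le_one_of_one_le_of_nonpos hx1 hk0.le) hM1
  -- positivity and lower bounds for Q
  have hQδ : ∀ t : ℝ, t ≤ 1 → δ^2 ≤ 1 - 2*r*t + r^2 := by
    intro t ht; rw [hδsq]; nlinarith
  have hQ1 : ∀ t : ℝ, t ≤ 0 → (1:ℝ) ≤ 1 - 2*r*t + r^2 := by
    intro t ht; nlinarith
  have hQδt : ∀ t : ℝ, 0 ≤ t → t ≤ 1 → δ^2 + (1 - t) ≤ 1 - 2*r*t + r^2 := by
    intro t ht0 ht1; rw [hδsq]; nlinarith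
  -- nonnegativity of f on [-1,1]
  have hfnn : ∀ t : ℝ, -1 ≤ t → t ≤ 1 → 0 ≤ f t := by
    intro t h1 h2
    exact mul_nonneg (rpow_nonneg (by nlinarith) _) (rpow_nonneg (by nlinarith [sq_nonneg (r - t)]) _)
  -- measurability
  have hfm : Measurable f := by rw [hfdef]; fun_prop
  -- pointwise bound on [0,1]
  have hf_le : ∀ t : ℝ, 0 ≤ t → t ≤ 1 →
      f t ≤ M * ((1 - t) ^ k * (δ^2 + (1 - t)) ^ (-γ/2)) := by
    intro t ht0 ht1
    have h1t : (0:ℝ) ≤ 1 - t := by linarith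
    have hsplit : (1 - t^2 : ℝ) ^ k = (1 - t)^k * (1 + t)^k := by
      rw [show (1 - t^2 : ℝ) = (1 - t) * (1 + t) by ring, Real.mul_rpow h1t (by linarith)]
    have h1 : (1 + t) ^ k ≤ M := hxM _ (by linarith) (by linarith)
    have h2 : (1 - 2*r*t + r^2) ^ (-γ/2) ≤ (δ^2 + (1 - t)) ^ (-γ/2) :=
      rpow_le_rpow_of_nonpos (by positivity) (hQδt t ht0 ht1) (by linarith)
    calc f t = ((1 - t)^k * (1 + t)^k) * (1 - 2*r*t + r^2) ^ (-γ/2) := by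
          rw [hfdef]; simp only; rw [hsplit]
      _ ≤ ((1 - t)^k * M) * ((δ^2 + (1 - t)) ^ (-γ/2)) := by
          apply mul_le_mul _ h2 (rpow_nonneg (le_trans hδsq0.le (hQδ t ht1)) _)
            (mul_nonneg (rpow_nonneg h1t _) hM0.le)
          exact mul_le_mul_of_nonneg_left h1 (rpow_nonneg h1t _)
      _ = M * ((1 - t) ^ k * (δ^2 + (1 - t)) ^ (-γ/2)) := by ring
  -- pointwise bound on [-1,0]
  have hf_le' : ∀ t : ℝ, -1 ≤ t → t ≤ 0 → f t ≤ M * (1 + t) ^ k := by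
    intro t ht0 ht1
    have h1t : (0:ℝ) ≤ 1 + t := by linarith
    have hsplit : (1 - t^2 : ℝ) ^ k = (1 - t)^k * (1 + t)^k := by
      rw [show (1 - t^2 : ℝ) = (1 - t) * (1 + t) by ring, Real.mul_rpow (by linarith) h1t]
    have h1 : (1 - t) ^ k ≤ M := hxM _ (by linarith) (by linarith)
    have h2 : (1 - 2*r*t + r^2) ^ (-γ/2) ≤ 1 := by
      calc (1 - 2*r*t + r^2) ^ (-γ/2) ≤ (1:ℝ) ^ (-γ/2) :=
            rpow_le_rpow_of_nonpos one_pos (hQ1 t ht1) (by linarith)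
        _ = 1 := Real.one_rpow _
    calc f t = ((1 - t)^k * (1 + t)^k) * (1 - 2*r*t + r^2) ^ (-γ/2) := by
          rw [hfdef]; simp only; rw [hsplit]
      _ ≤ ((M * (1 + t)^k)) * 1 := by
          apply mul_le_mul _ h2 (rpow_nonneg (by linarith [hQ1 t ht1]) _)
            (mul_nonneg hM0.le (rpow_nonneg h1t _))
          exact mul_le_mul_of_nonneg_right h1 (rpow_nonneg h1t _)
      _ = M * (1 + t) ^ k := by ring
  -- basic integrable functions
  have hint1 : IntervalIntegrable (fun t : ℝ => (1+t)^k) volume (-1) 0 := by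
    have h := (intervalIntegrable_rpow' (a := 0) (b := 1) hk).comp_add_right 1
    norm_num at h
    simpa [add_comm] using h
  have hint2 : IntervalIntegrable (fun t : ℝ => (1-t)^k) volume 0 1 := by
    have h := ((intervalIntegrable_rpow' (a := 0) (b := 1) hk).comp_sub_left 1).symm
    norm_num at h
    exact h
  have hint2' : IntervalIntegrable (fun t : ℝ => (1-t)^k * (δ^2 + (1-t)) ^ (-γ/2)) volume 0 1 := by
    apply ((hint2.const_mul ((δ^2:ℝ) ^ (-γ/2))).mono_fun
      ((by fun_prop : Measurable (fun t : ℝ => (1-t)^k * (δ^2 + (1-t)) ^ (-γ/2))).aestronglyMeasurable.restrict))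
    filter_upwards [ae_restrict_mem measurableSet_Ioc] with t ht
    rw [Set.uIoc_of_le (by norm_num : (0:ℝ) ≤ 1)] at ht
    have h1t : (0:ℝ) ≤ 1 - t := by linarith [ht.2]
    have hb : (δ^2 + (1-t)) ^ (-γ/2) ≤ (δ^2) ^ (-γ/2) :=
      rpow_le_rpow_of_nonpos hδsq0 (by linarith) (by linarith)
    rw [Real.norm_eq_abs, Real.norm_eq_abs,
      abs_of_nonneg (mul_nonneg (rpow_nonneg h1t _) (rpow_nonneg (by positivity) _)),
      abs_of_nonneg (mul_nonneg (rpow_nonneg (by positivity) _) (rpow_nonneg h1t _))]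
    rw [mul_comm ((δ^2:ℝ) ^ (-γ/2))]
    exact mul_le_mul_of_nonneg_left hb (rpow_nonneg h1t _)
  -- integrability of f on the two halves
  have hfint2 : IntervalIntegrable f volume 0 1 := by
    apply (hint2'.const_mul M).mono_fun (hfm.aestronglyMeasurable.restrict)
    filter_upwards [ae_restrict_mem measurableSet_Ioc] with t ht
    rw [Set.uIoc_of_le (by norm_num : (0:ℝ) ≤ 1)] at ht
    have h1t : (0:ℝ) ≤ 1 - t := by linarith [ht.2]
    rw [Real.norm_eq_abs, Real.norm_eq_abs, abs_of_nonneg (hfnn t (by linarith [ht.1]) ht.2),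
      abs_of_nonneg (mul_nonneg hM0.le (mul_nonneg (rpow_nonneg h1t _) (rpow_nonneg (by positivity) _)))]
    exact hf_le t ht.1.le ht.2
  have hfint1 : IntervalIntegrable f volume (-1) 0 := by
    apply (hint1.const_mul M).mono_fun (hfm.aestronglyMeasurable.restrict)
    filter_upwards [ae_restrict_mem measurableSet_Ioc] with t ht
    rw [Set.uIoc_of_le (by norm_num : (-1:ℝ) ≤ 0)] at ht
    rw [Real.norm_eq_abs, Real.norm_eq_abs, abs_of_nonneg (hfnn t ht.1.le (by linarith [ht.2])),
      abs_of_nonneg (mul_nonneg hM0.le (rpow_nonneg (by linarith [ht.1.le]) _))]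
    exact hf_le' t ht.1.le ht.2
  -- split points
  have hc0 : (0:ℝ) ≤ 1 - δ^2 := by linarith
  have hc1 : 1 - δ^2 ≤ 1 := by linarith
  -- Part A : ∫_{-1}^0 f ≤ M/(k+1)
  have hEA : ∫ t in (-1:ℝ)..0, (1+t)^k = 1/(k+1) := by
    have h := integral_comp_add_right (a := (-1:ℝ)) (b := 0) (fun x : ℝ => x ^ k) 1
    norm_num at h
    calc ∫ t in (-1:ℝ)..0, (1+t)^k = ∫ t in (-1:ℝ)..0, (t+1)^k := by
          apply integral_congr; intro x _; ring_nf
      _ = ∫ x in (0:ℝ)..1, x^k := h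
      _ = 1/(k+1) := by
          rw [integral_rpow (Or.inl hk), Real.one_rpow, Real.zero_rpow (by linarith)]; norm_num
  have hA : ∫ t in (-1:ℝ)..0, f t ≤ M * (1/(k+1)) := by
    calc ∫ t in (-1:ℝ)..0, f t ≤ ∫ t in (-1:ℝ)..0, M * (1+t)^k := by
          apply integral_mono_on (by norm_num) hfint1 (hint1.const_mul M)
          intro t ht; exact hf_le' t ht.1 ht.2
      _ = M * (1/(k+1)) := by rw [intervalIntegral.integral_const_mul, hEA]
  -- Part B1 : ∫_{1-δ²}^1 f ≤ M δ^{-γ} (δ²)^{k+1}/(k+1)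
  have hδmg : ((δ^2:ℝ)) ^ (-γ/2) = δ ^ (-γ) := by
    have h2 : ((2:ℕ):ℝ) * (-γ/2) = -γ := by push_cast; ring
    rw [← Real.rpow_natCast δ 2, ← Real.rpow_mul hδ0.le, h2]
  have hEB1 : ∫ t in (1-δ^2:ℝ)..1, (1-t)^k = (δ^2)^(k+1)/(k+1) := by
    have h := integral_comp_sub_left (a := (1-δ^2:ℝ)) (b := 1) (fun x : ℝ => x ^ k) 1
    norm_num at h
    rw [h, integral_rpow (Or.inl hk), Real.zero_rpow (by linarith)]
    ring
  have hB1 : ∫ t in (1-δ^2:ℝ)..1, f t ≤ M * (δ ^ (-γ + 2*k + 2) / (k+1)) := by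
    have hmono : ∫ t in (1-δ^2:ℝ)..1, f t
        ≤ ∫ t in (1-δ^2:ℝ)..1, (M * δ^(-γ)) * (1-t)^k := by
      apply integral_mono_on (by linarith) (hfint2.mono_set ?_)
          ((hint2.mono_set ?_).const_mul _) ?_
      · rw [Set.uIcc_of_le (by linarith), Set.uIcc_of_le (by norm_num)]
        exact Set.Icc_subset_Icc hc0 le_rfl
      · rw [Set.uIcc_of_le (by linarith), Set.uIcc_of_le (by norm_num)]
        exact Set.Icc_subset_Icc hc0 le_rfl
      · intro t ht
        have ht0 : 0 ≤ t := le_trans hc0 ht.1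
        have h1t : (0:ℝ) ≤ 1 - t := by linarith [ht.2]
        calc f t ≤ M * ((1 - t) ^ k * (δ^2 + (1 - t)) ^ (-γ/2)) := hf_le t ht0 ht.2
          _ ≤ M * ((1 - t) ^ k * (δ^2) ^ (-γ/2)) := by
              apply mul_le_mul_of_nonneg_left _ hM0.le
              exact mul_le_mul_of_nonneg_left
                (rpow_le_rpow_of_nonpos hδsq0 (by linarith) (by linarith))
                (rpow_nonneg h1t _)
          _ = (M * δ^(-γ)) * (1-t)^k := by rw [hδmg]; ring
    calc ∫ t in (1-δ^2:ℝ)..1, f t ≤ (M * δ^(-γ)) * ((δ^2)^(k+1)/(k+1)) := by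
          rw [← hEB1, ← intervalIntegral.integral_const_mul]; exact hmono
      _ = M * (δ ^ (-γ + 2*k + 2) / (k+1)) := by
          have hcomb : δ^(-γ) * ((δ^2:ℝ))^(k+1) = δ ^ (-γ+2*k+2) := by
            rw [← Real.rpow_natCast δ 2, ← Real.rpow_mul hδ0.le, ← Real.rpow_add hδ0]
            congr 1; push_cast; ring
          rw [show (M * δ^(-γ)) * ((δ^2:ℝ)^(k+1)/(k+1))
              = M * ((δ^(-γ) * (δ^2)^(k+1))/(k+1)) by ring, hcomb]
  -- Part B2 : ∫_0^{1-δ²} f ≤ M δ^β / (γ/2 - k - 1)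
  have hEB2 : ∫ t in (0:ℝ)..(1-δ^2), (1-t)^(k - γ/2)
      = (1^(k-γ/2+1) - (δ^2)^(k-γ/2+1))/(k-γ/2+1) := by
    have h := integral_comp_sub_left (a := (0:ℝ)) (b := 1-δ^2) (fun x : ℝ => x ^ (k-γ/2)) 1
    norm_num at h
    rw [h, integral_rpow]
    right
    constructor
    · intro hcon; rw [hcon] at hp; norm_num at hp
    · rw [Set.uIcc_of_le (by linarith)]
      intro hcon
      exact absurd hcon.1 (by norm_num [hδsq0, hδ0.ne'])
  have hB2 : ∫ t in (0:ℝ)..(1-δ^2), f t ≤ M * (δ ^ (-γ + 2*k + 2) / (γ/2 - k - 1)) := by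
    have hcont : IntervalIntegrable (fun t : ℝ => (1-t)^(k-γ/2)) volume 0 (1-δ^2) := by
      apply ContinuousOn.intervalIntegrable
      apply ContinuousOn.rpow_const (by fun_prop)
      intro t ht
      rw [Set.uIcc_of_le (by linarith)] at ht
      left; nlinarith [ht.2]
    have hmono : ∫ t in (0:ℝ)..(1-δ^2), f t
        ≤ ∫ t in (0:ℝ)..(1-δ^2), M * (1-t)^(k-γ/2) := by
      apply integral_mono_on (by linarith) (hfint2.mono_set ?_) (hcont.const_mul M) ?_
      · rw [Set.uIcc_of_le (by linarith), Set.uIcc_of_le (by norm_num)]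
        exact Set.Icc_subset_Icc le_rfl hc1
      · intro t ht
        have h1t : (0:ℝ) < 1 - t := by nlinarith [ht.2]
        calc f t ≤ M * ((1 - t) ^ k * (δ^2 + (1 - t)) ^ (-γ/2)) :=
              hf_le t ht.1 (by linarith)
          _ ≤ M * ((1 - t) ^ k * (1 - t) ^ (-γ/2)) := by
              apply mul_le_mul_of_nonneg_left _ hM0.le
              exact mul_le_mul_of_nonneg_left
                (rpow_le_rpow_of_nonpos h1t (by linarith) (by linarith))
                (rpow_nonneg h1t.le _)
          _ = M * (1-t)^(k-γ/2) := by
              rw [← Real.rpow_add h1t]; ring_nf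
    have hval : (1^(k-γ/2+1) - (δ^2)^(k-γ/2+1))/(k-γ/2+1) ≤ δ ^ (-γ + 2*k + 2) / (γ/2 - k - 1) := by
      have hX : ((δ^2:ℝ))^(k-γ/2+1) = δ ^ (-γ + 2*k + 2) := by
        have h2 : ((2:ℕ):ℝ) * (k-γ/2+1) = -γ + 2*k + 2 := by push_cast; ring
        rw [← Real.rpow_natCast δ 2, ← Real.rpow_mul hδ0.le, h2]
      rw [Real.one_rpow, hX]
      set Y := δ ^ (-γ + 2*k + 2) with hY
      have hq : k - γ/2 + 1 ≠ 0 := ne_of_lt hp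
      have hqq : (0:ℝ) < γ/2 - k - 1 := by linarith
      calc (1 - Y)/(k-γ/2+1) = (Y - 1)/(γ/2-k-1) := by
            rw [div_eq_div_iff hq (ne_of_gt hqq)]; ring
        _ ≤ Y/(γ/2-k-1) := by gcongr; linarith
    calc ∫ t in (0:ℝ)..(1-δ^2), f t ≤ M * ((1^(k-γ/2+1) - (δ^2)^(k-γ/2+1))/(k-γ/2+1)) := by
          rw [← hEB2, ← intervalIntegral.integral_const_mul]; exact hmono
      _ ≤ M * (δ ^ (-γ + 2*k + 2) / (γ/2 - k - 1)) := mul_le_mul_of_nonneg_left hval hM0.le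
  -- assemble
  have hsplit1 : ∫ t in (-1:ℝ)..1, f t = (∫ t in (-1:ℝ)..0, f t) + ∫ t in (0:ℝ)..1, f t :=
    (integral_add_adjacent_intervals hfint1 hfint2).symm
  have hsplit2 : ∫ t in (0:ℝ)..1, f t
      = (∫ t in (0:ℝ)..(1-δ^2), f t) + ∫ t in (1-δ^2:ℝ)..1, f t :=
    (integral_add_adjacent_intervals (hfint2.mono_set (by
      rw [Set.uIcc_of_le (by linarith), Set.uIcc_of_le (by norm_num)]
      exact Set.Icc_subset_Icc le_rfl hc1)) (hfint2.mono_set (by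
      rw [Set.uIcc_of_le (by linarith), Set.uIcc_of_le (by norm_num)]
      exact Set.Icc_subset_Icc hc0 le_rfl))).symm
  have hnn : 0 ≤ ∫ t in (-1:ℝ)..1, f t := by
    apply intervalIntegral.integral_nonneg (by norm_num)
    intro t ht; exact hfnn t ht.1 ht.2
  have honele : (1:ℝ) ≤ δ ^ (-γ + 2*k + 2) :=
    Real.one_le_rpow_of_pos_of_le_one_of_nonpos hδ0 (by linarith) (by linarith)
  have hAfinal : ∫ t in (-1:ℝ)..0, f t ≤ M * (1/(k+1)) * δ ^ (-γ + 2*k + 2) := by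
    calc ∫ t in (-1:ℝ)..0, f t ≤ M * (1/(k+1)) := hA
      _ = M * (1/(k+1)) * 1 := by ring
      _ ≤ M * (1/(k+1)) * δ ^ (-γ + 2*k + 2) := by
          apply mul_le_mul_of_nonneg_left honele (by positivity)
  rw [abs_of_nonneg hnn, hsplit1, hsplit2]
  have : M * (1/(k+1) + 1/(k+1) + 1/(γ/2 - k - 1)) * δ ^ (-γ + 2*k + 2)
      = M * (1/(k+1)) * δ ^ (-γ + 2*k + 2) + M * (δ ^ (-γ + 2*k + 2) / (γ/2 - k - 1))
        + M * (δ ^ (-γ + 2*k + 2) / (k+1)) := by ring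
  rw [this]
  linarith [hAfinal, hB1, hB2]

/-- Case `γ > 2k+2`: power bound near `r = 1`. -/
theorem Ikernel_power_bound :
    ∀ γ k : ℝ, k > -1 → γ > 2 * k + 2 →
      ∃ C ε : ℝ, 0 < ε ∧ ∀ r : ℝ, 0 < r → |r - 1| < ε → r ≠ 1 →
        |Ikernel γ k r| ≤ C * |1 - r| ^ (-γ + 2 * k + 2) := by
  intro γ k hk hγ
  exact ⟨(max 1 (2 ^ k)) * (1/(k+1) + 1/(k+1) + 1/(γ/2 - k - 1)), 1/2, by norm_num,
    fun r => by simpa [Ikernel] using aux_bound γ k hk hγ r⟩
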